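/- Let α ∈ (0, π/2) and define γ(r,k) = (2k + 2·r·k + r/cos α)/(r·k)^{2/3} on (0,∞)². Then (r, k) = (1, 1/(2·cos α)) is the unique point in (0,∞)² at which both partial derivatives ∂γ/∂r and ∂γ/∂k vanish. -/

import Mathlib

open Real

/-- The normalized surface function `γ(r,k) = (2k + 2rk + r/cos α) / (rk)^{2/3}`. -/
noncomputable def hipGamma (α r k : ℝ) : ℝ :=
  (2 * k + 2 * r * k + r / Real.cos α) / (r * k) ^ ((2 : ℝ) / 3)

lemma hip_deriv_fst (c r k : ℝ) (hr : 0 < r) (hk : 0 < k) :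
    deriv (fun r' => (2 * k + 2 * r' * k + r' / c) / (r' * k) ^ ((2 : ℝ) / 3)) r
      = ((2 * k + 1 / c) * (r * k) ^ ((2 : ℝ) / 3)
          - (2 * k + 2 * r * k + r / c) * ((2 : ℝ) / 3 * (r * k) ^ ((2 : ℝ) / 3 - 1) * k))
        / ((r * k) ^ ((2 : ℝ) / 3)) ^ 2 := by
  have hrk : (0 : ℝ) < r * k := mul_pos hr hk
  have hN : HasDerivAt (fun r' : ℝ => 2 * k + 2 * r' * k + r' / c) (2 * k + 1 / c) r := by
    have h1 : HasDerivAt (fun r' : ℝ => 2 * r' * k) (2 * k) r := by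
      simpa [mul_assoc] using (((hasDerivAt_id r).const_mul 2).mul_const k)
    have h2 : HasDerivAt (fun r' : ℝ => r' / c) (1 / c) r := by
      simpa [div_eq_mul_inv] using ((hasDerivAt_id r).mul_const c⁻¹)
    simpa [Pi.add_def] using ((hasDerivAt_const r (2 * k)).add h1).add h2
  have hD : HasDerivAt (fun r' : ℝ => (r' * k) ^ ((2 : ℝ) / 3))
      ((2 : ℝ) / 3 * (r * k) ^ ((2 : ℝ) / 3 - 1) * k) r := by
    have h := (Real.hasDerivAt_rpow_const (x := r * k) (p := (2 : ℝ) / 3)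
      (Or.inl hrk.ne')).comp r ((hasDerivAt_id r).mul_const k)
    simpa [Function.comp_def, mul_comm, mul_assoc, mul_left_comm] using h
  have hDne : (r * k) ^ ((2 : ℝ) / 3) ≠ 0 := (Real.rpow_pos_of_pos hrk _).ne'
  exact (hN.div hD hDne).deriv

lemma hip_deriv_snd (c r k : ℝ) (hr : 0 < r) (hk : 0 < k) :
    deriv (fun k' => (2 * k' + 2 * r * k' + r / c) / (r * k') ^ ((2 : ℝ) / 3)) k
      = ((2 + 2 * r) * (r * k) ^ ((2 : ℝ) / 3)
          - (2 * k + 2 * r * k + r / c) * ((2 : ℝ) / 3 * (r * k) ^ ((2 : ℝ) / 3 - 1) * r))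
        / ((r * k) ^ ((2 : ℝ) / 3)) ^ 2 := by
  have hrk : (0 : ℝ) < r * k := mul_pos hr hk
  have hN : HasDerivAt (fun k' : ℝ => 2 * k' + 2 * r * k' + r / c) (2 + 2 * r) k := by
    have h1 : HasDerivAt (fun k' : ℝ => 2 * k') (2 : ℝ) k := by
      simpa using ((hasDerivAt_id k).const_mul 2)
    have h2 : HasDerivAt (fun k' : ℝ => 2 * r * k') (2 * r) k := by
      simpa using ((hasDerivAt_id k).const_mul (2 * r))
    simpa using (h1.add h2).add_const (r / c)
  have hD : HasDerivAt (fun k' : ℝ => (r * k') ^ ((2 : ℝ) / 3))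
      ((2 : ℝ) / 3 * (r * k) ^ ((2 : ℝ) / 3 - 1) * r) k := by
    have h := (Real.hasDerivAt_rpow_const (x := r * k) (p := (2 : ℝ) / 3)
      (Or.inl hrk.ne')).comp k ((hasDerivAt_id k).const_mul r)
    simpa [Function.comp_def, mul_comm, mul_assoc, mul_left_comm] using h
  have hDne : (r * k) ^ ((2 : ℝ) / 3) ≠ 0 := (Real.rpow_pos_of_pos hrk _).ne'
  exact (hN.div hD hDne).deriv

/-- For `α ∈ (0, π/2)`, the point `(1, 1/(2 cos α))` is the unique
point of `(0,∞)²` at which both partial derivatives of `γ` vanish. -/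
theorem hip_roof_unique_critical_point
    (α : ℝ) (hα : α ∈ Set.Ioo 0 (π / 2)) :
    ∀ r k : ℝ, 0 < r → 0 < k →
      ((deriv (fun r' => hipGamma α r' k) r = 0 ∧
        deriv (fun k' => hipGamma α r k') k = 0) ↔
        (r = 1 ∧ k = 1 / (2 * Real.cos α))) := by
  intro r k hr hk
  have hc : 0 < Real.cos α := Real.cos_pos_of_mem_Ioo ⟨by linarith [hα.1, Real.pi_pos], hα.2⟩
  set c := Real.cos α with hcdef
  have hrk : (0 : ℝ) < r * k := mul_pos hr hk
  have hP : 0 < (r * k) ^ ((2 : ℝ) / 3) := Real.rpow_pos_of_pos hrk _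
  have hQ : (r * k) ^ ((2 : ℝ) / 3 - 1) = (r * k) ^ ((2 : ℝ) / 3) / (r * k) := by
    rw [Real.rpow_sub hrk, Real.rpow_one]
  simp only [hipGamma, ← hcdef, hip_deriv_fst c r k hr hk, hip_deriv_snd c r k hr hk, hQ]
  have hP2 : ((r * k) ^ ((2 : ℝ) / 3)) ^ 2 ≠ 0 := pow_ne_zero 2 hP.ne'
  rw [div_eq_zero_iff, div_eq_zero_iff]
  constructor
  · rintro ⟨h1, h2⟩
    have h1' := h1.resolve_right hP2
    have h2' := h2.resolve_right hP2
    have e1 : (2 * k + 1 / c) - (2 * k + 2 * r * k + r / c) * ((2 : ℝ) / 3) * k / (r * k) = 0 := by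
      have hfac : ((2 * k + 1 / c) - (2 * k + 2 * r * k + r / c) * ((2 : ℝ) / 3) * k / (r * k))
          * (r * k) ^ ((2 : ℝ) / 3) = 0 := by rw [← h1']; ring
      exact (mul_eq_zero.mp hfac).resolve_right hP.ne'
    have e2 : (2 + 2 * r) - (2 * k + 2 * r * k + r / c) * ((2 : ℝ) / 3) * r / (r * k) = 0 := by
      have hfac : ((2 + 2 * r) - (2 * k + 2 * r * k + r / c) * ((2 : ℝ) / 3) * r / (r * k))
          * (r * k) ^ ((2 : ℝ) / 3) = 0 := by rw [← h2']; ring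
      exact (mul_eq_zero.mp hfac).resolve_right hP.ne'
    have hcne : c ≠ 0 := hc.ne'
    field_simp at e1 e2
    have hA : 2 * r * (k * c) + r - 4 * (k * c) = 0 := by
      have h : (k * c) * (2 * r * (k * c) + r - 4 * (k * c)) = 0 := by linear_combination (k * c) * e1
      exact (mul_eq_zero.mp h).resolve_left (mul_pos hk hc).ne'
    have hB : k * c + r * (k * c) - r = 0 := by
      have h : (2 * r) * (k * c + r * (k * c) - r) = 0 := by linear_combination r * e2
      exact (mul_eq_zero.mp h).resolve_left (by positivity)
    have hr1 : r = 1 := by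
      have h3 : k * c * r = k * c * 1 := by linear_combination (hA + hB) / 3
      exact mul_left_cancel₀ (mul_pos hk hc).ne' h3
    subst hr1
    refine ⟨rfl, ?_⟩
    field_simp
    linear_combination hB
  · rintro ⟨hr1, hk1⟩
    subst hr1
    subst hk1
    have hcne : c ≠ 0 := hc.ne'
    constructor
    · left
      have hs : (2 * (1 / (2 * c)) + 1 / c)
          - (2 * (1 / (2 * c)) + 2 * 1 * (1 / (2 * c)) + 1 / c) * ((2 : ℝ) / 3)
            * (1 / (2 * c)) / (1 * (1 / (2 * c))) = 0 := by
        field_simp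
        ring
      linear_combination (1 * (1 / (2 * c))) ^ ((2 : ℝ) / 3) * hs
    · left
      have hs : (2 + 2 * 1)
          - (2 * (1 / (2 * c)) + 2 * 1 * (1 / (2 * c)) + 1 / c) * ((2 : ℝ) / 3)
            * 1 / (1 * (1 / (2 * c))) = 0 := by
        field_simp
        ring
      linear_combination (1 * (1 / (2 * c))) ^ ((2 : ℝ) / 3) * hs
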